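/- Lemma (set B≤, restricted model). Let q ∈ Prob({0,1}²) and μ := μ₂. Then the set B≤ := {(π₁, χ^{(1)}_{1|1}, χ^{(2)}_{1|1}) : (π,χ) ∈ Θ₂, μ(π,χ) = q, χ^{(1)}_{0|0} ≤ χ^{(2)}_{0|0}} is nonempty and equals the set of all (Pr, Se₁, Se₂) ∈ [0,1]³ satisfying: −q₀₀ ≤ Pr·(Se₁+Se₂−1) ≤ q₁₁; Pr − q_{0+} ≤ Pr·Se₁ ≤ q_{1+}; Pr − q_{+0} ≤ Pr·Se₂ ≤ q_{+1}; and q₀₁ − q₁₀ ≤ Pr·(Se₂−Se₁) ≤ q₀₁. -/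

import Mathlib

open scoped BigOperators

noncomputable section

/-- `p` is a discrete probability density on the finite set `X`,
i.e. a function `X → [0,1]` summing to `1`. -/
def IsProb {X : Type*} [Fintype X] (p : X → ℝ) : Prop :=
  (∀ x, 0 ≤ p x ∧ p x ≤ 1) ∧ ∑ x, p x = 1

/-- `χ` is a Markov transition density: `χ x` is a probability density for each `x`. -/
def IsMarkov {X Y : Type*} [Fintype Y] (χ : X → Y → ℝ) : Prop :=
  ∀ x, IsProb (χ x)

/-- The mixture density `μ₁(π,χ)` on `{0,1}` (indices: `χ i j = χ_{j|i}`). -/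
def mu1 (π : Fin 2 → ℝ) (χ : Fin 2 → Fin 2 → ℝ) : Fin 2 → ℝ :=
  fun j => ∑ i, π i * χ i j

/-- The mixture density `μ₂(π,χ)` on `{0,1}²` (indices: `χ i j = χ_{j|i}`). -/
def mu2 (π : Fin 2 → ℝ) (χ : Fin 2 → Fin 2 × Fin 2 → ℝ) : Fin 2 × Fin 2 → ℝ :=
  fun j => ∑ i, π i * χ i j

/-- First-test characteristic: `chi1 χ i ι = χ^{(1)}_{ι|i} = χ_{ι0|i} + χ_{ι1|i}`. -/
def chi1 (χ : Fin 2 → Fin 2 × Fin 2 → ℝ) : Fin 2 → Fin 2 → ℝ :=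
  fun i ι => χ i (ι, 0) + χ i (ι, 1)

/-- Second-test characteristic: `chi2 χ i ι = χ^{(2)}_{ι|i} = χ_{0ι|i} + χ_{1ι|i}`. -/
def chi2 (χ : Fin 2 → Fin 2 × Fin 2 → ℝ) : Fin 2 → Fin 2 → ℝ :=
  fun i ι => χ i (0, ι) + χ i (1, ι)

/-- The multinomial point mass `M_{n,q}({k}) = n! ∏_x q_x^{k_x}/k_x!`. -/
def mPMF {X : Type*} [Fintype X] (n : ℕ) (q : X → ℝ) (k : X → ℕ) : ℝ :=
  (n.factorial : ℝ) * ∏ x, q x ^ k x / ((k x).factorial : ℝ)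

/-- `mProb n q S` is the probability, under the multinomial distribution `M_{n,q}`
(supported on `{k : Σ_x k_x = n}`), of the event `S`. -/
def mProb {X : Type*} [Fintype X] (n : ℕ) (q : X → ℝ) (S : Set (X → ℕ)) : ℝ :=
  ∑' k : X → ℕ, Set.indicator {k | (∑ x, k x) = n ∧ k ∈ S} (mPMF n q) k


set_option maxHeartbeats 1600000 in
/-- Lemma (set B≤, restricted model): the set of triples `(Pr, Se₁, Se₂)` compatible
with `q` under the restriction `Sp₁ ≤ Sp₂`. -/
theorem stmt_12 (q : Fin 2 × Fin 2 → ℝ) (hq : IsProb q) :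
    Set.Nonempty {x : ℝ × ℝ × ℝ |
        ∃ π : Fin 2 → ℝ, ∃ χ : Fin 2 → Fin 2 × Fin 2 → ℝ,
          IsProb π ∧ IsMarkov χ ∧ mu2 π χ = q ∧ chi1 χ 0 0 ≤ chi2 χ 0 0 ∧
          x = (π 1, chi1 χ 1 1, chi2 χ 1 1)} ∧
    {x : ℝ × ℝ × ℝ |
        ∃ π : Fin 2 → ℝ, ∃ χ : Fin 2 → Fin 2 × Fin 2 → ℝ,
          IsProb π ∧ IsMarkov χ ∧ mu2 π χ = q ∧ chi1 χ 0 0 ≤ chi2 χ 0 0 ∧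
          x = (π 1, chi1 χ 1 1, chi2 χ 1 1)} =
    {x : ℝ × ℝ × ℝ |
        x.1 ∈ Set.Icc (0:ℝ) 1 ∧ x.2.1 ∈ Set.Icc (0:ℝ) 1 ∧ x.2.2 ∈ Set.Icc (0:ℝ) 1 ∧
        -q (0, 0) ≤ x.1 * (x.2.1 + x.2.2 - 1) ∧ x.1 * (x.2.1 + x.2.2 - 1) ≤ q (1, 1) ∧
        x.1 - (q (0, 0) + q (0, 1)) ≤ x.1 * x.2.1 ∧ x.1 * x.2.1 ≤ q (1, 0) + q (1, 1) ∧
        x.1 - (q (0, 0) + q (1, 0)) ≤ x.1 * x.2.2 ∧ x.1 * x.2.2 ≤ q (0, 1) + q (1, 1) ∧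
        q (0, 1) - q (1, 0) ≤ x.1 * (x.2.2 - x.2.1) ∧ x.1 * (x.2.2 - x.2.1) ≤ q (0, 1)} := by
  obtain ⟨hqb, hqsum⟩ := hq
  have hq00 := (hqb (0,0)).1
  have hq01 := (hqb (0,1)).1
  have hq10 := (hqb (1,0)).1
  have hq11 := (hqb (1,1)).1
  have hqs : q (0,0) + q (0,1) + q (1,0) + q (1,1) = 1 := by
    rw [Fintype.sum_prod_type] at hqsum
    simp only [Fin.sum_univ_two] at hqsum
    linarith
  have hq0eq : q 0 = q (0,0) := rfl
  have hq1eq : q 1 = q (1,1) := rfl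
  constructor
  · -- Nonemptiness
    refine ⟨(1, q (1,0) + q (1,1), q (0,1) + q (1,1)), ![0,1],
      ![fun _ => (1:ℝ)/4, q], ⟨?_, ?_⟩, ?_, ?_, ?_, ?_⟩
    · intro i; fin_cases i <;> norm_num
    · simp [Fin.sum_univ_two]
    · intro i; fin_cases i
      · refine ⟨fun p => by norm_num, ?_⟩
        rw [Fintype.sum_prod_type]
        simp [Fin.sum_univ_two]
        norm_num
      · refine ⟨fun p => by simpa using hqb p, ?_⟩
        simpa using hqsum
    · funext p; simp [mu2, Fin.sum_univ_two]
    · simp [chi1, chi2]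
    · simp [chi1, chi2]
  · -- Set equality
    ext x
    obtain ⟨Pr, Se1, Se2⟩ := x
    simp only [Set.mem_setOf_eq, Set.mem_Icc]
    constructor
    · rintro ⟨π, χ, ⟨hπb, hπs⟩, hχ, hmu, hle, hx⟩
      simp only [Prod.mk.injEq] at hx
      obtain ⟨hx1, hx2, hx3⟩ := hx
      subst hx1; subst hx2; subst hx3
      obtain ⟨hcb, hcs⟩ := hχ 1
      obtain ⟨hdb, hds⟩ := hχ 0
      rw [Fintype.sum_prod_type] at hcs hds
      simp only [Fin.sum_univ_two] at hcs hds hπs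
      have hm : ∀ p, π 0 * χ 0 p + π 1 * χ 1 p = q p := by
        intro p
        have := congrFun hmu p
        simpa [mu2, Fin.sum_univ_two] using this
      have hm00 := hm (0,0); have hm01 := hm (0,1)
      have hm10 := hm (1,0); have hm11 := hm (1,1)
      have hπ0 := hπb 0; have hπ1 := hπb 1
      have hb00 : 0 ≤ π 0 * χ 0 (0,0) := mul_nonneg hπ0.1 (hdb _).1
      have hb01 : 0 ≤ π 0 * χ 0 (0,1) := mul_nonneg hπ0.1 (hdb _).1
      have hb10 : 0 ≤ π 0 * χ 0 (1,0) := mul_nonneg hπ0.1 (hdb _).1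
      have hb11 : 0 ≤ π 0 * χ 0 (1,1) := mul_nonneg hπ0.1 (hdb _).1
      have ha00 : 0 ≤ π 1 * χ 1 (0,0) := mul_nonneg hπ1.1 (hcb _).1
      have ha01 : 0 ≤ π 1 * χ 1 (0,1) := mul_nonneg hπ1.1 (hcb _).1
      have ha10 : 0 ≤ π 1 * χ 1 (1,0) := mul_nonneg hπ1.1 (hcb _).1
      have ha11 : 0 ≤ π 1 * χ 1 (1,1) := mul_nonneg hπ1.1 (hcb _).1
      have hsa : π 1 * χ 1 (0,0) + π 1 * χ 1 (0,1) + π 1 * χ 1 (1,0) + π 1 * χ 1 (1,1)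
          = π 1 := by linear_combination (π 1) * hcs
      have hsb : π 0 * χ 0 (0,0) + π 0 * χ 0 (0,1) + π 0 * χ 0 (1,0) + π 0 * χ 0 (1,1)
          = π 0 := by linear_combination (π 0) * hds
      have hle' : χ 0 (0,1) ≤ χ 0 (1,0) := by
        have := hle; simp only [chi1, chi2] at this; linarith
      have hsp : π 0 * χ 0 (0,1) ≤ π 0 * χ 0 (1,0) :=
        mul_le_mul_of_nonneg_left hle' hπ0.1
      have hc00 := hcb (0,0); have hc01 := hcb (0,1)
      have hc10 := hcb (1,0); have hc11 := hcb (1,1)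
      simp only [chi1, chi2]
      refine ⟨⟨hπ1.1, hπ1.2⟩, ⟨?_, ?_⟩, ⟨?_, ?_⟩, ?_, ?_, ?_, ?_, ?_, ?_, ?_, ?_⟩ <;>
        linarith [hm00, hm01, hm10, hm11, hb00, hb01, hb10, hb11, ha00, ha01, ha10, ha11,
          hsa, hsb, hsp, hπs, hπ0.1, hπ1.1, hcs, hc00.1, hc00.2, hc01.1, hc01.2,
          hc10.1, hc10.2, hc11.1, hc11.2]
    · rintro ⟨⟨hP0, hP1⟩, ⟨hS10, hS11⟩, ⟨hS20, hS21⟩, h1, h2, h3, h4, h5, h6, h7, h8⟩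
      set s := Pr * Se1 with hs
      set t := Pr * Se2 with ht
      have h7' : q (0,1) - q (1,0) ≤ t - s := by rw [hs, ht]; nlinarith [h7]
      have h8' : t - s ≤ q (0,1) := by rw [hs, ht]; nlinarith [h8]
      have h1' : -q (0,0) ≤ s + t - Pr := by rw [hs, ht]; nlinarith [h1]
      have h2' : s + t - Pr ≤ q (1,1) := by rw [hs, ht]; nlinarith [h2]
      have hs0 : 0 ≤ s := mul_nonneg hP0 hS10
      have ht0 : 0 ≤ t := mul_nonneg hP0 hS20
      have hsP : s ≤ Pr := by rw [hs]; nlinarith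
      have htP : t ≤ Pr := by rw [ht]; nlinarith
      set u := max (max 0 (s - q (1,0))) (max (t - q (0,1)) (s + t - Pr)) with hu
      have hu0 : 0 ≤ u := le_max_of_le_left (le_max_left _ _)
      have hua : s - q (1,0) ≤ u := le_max_of_le_left (le_max_right _ _)
      have hub : t - q (0,1) ≤ u := le_max_of_le_right (le_max_left _ _)
      have huc : s + t - Pr ≤ u := le_max_of_le_right (le_max_right _ _)
      have hus : u ≤ s :=
        max_le (max_le (by linarith) (by linarith)) (max_le (by linarith) (by linarith))
      have hut : u ≤ t :=
        max_le (max_le (by linarith) (by linarith)) (max_le (by linarith) (by linarith))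
      have hu11 : u ≤ q (1,1) :=
        max_le (max_le (by linarith) (by linarith)) (max_le (by linarith) (by linarith))
      have hu00 : u ≤ q (0,0) + s + t - Pr :=
        max_le (max_le (by linarith) (by linarith)) (max_le (by linarith) (by linarith))
      refine ⟨![1 - Pr, Pr],
        ![fun p => if Pr = 1 then (1:ℝ)/4
            else (q p - !![Pr - s - t + u, t - u; s - u, u] p.1 p.2) / (1 - Pr),
          fun p => if Pr = 0 then (![1 - Se1, Se1] p.1) * (![1 - Se2, Se2] p.2)
            else !![Pr - s - t + u, t - u; s - u, u] p.1 p.2 / Pr],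
        ⟨?_, ?_⟩, ?_, ?_, ?_, ?_⟩
      · intro i; fin_cases i <;> simp <;> constructor <;> linarith
      · simp [Fin.sum_univ_two]
      · intro i; fin_cases i
        · -- χ 0 row
          simp only [Fin.mk_zero, Fin.mk_one, Matrix.cons_val_zero]
          by_cases hPr1 : Pr = 1
          · simp only [if_pos hPr1]
            refine ⟨fun p => by norm_num, ?_⟩
            rw [Fintype.sum_prod_type]
            simp [Fin.sum_univ_two]
            norm_num
          · have hPlt : Pr < 1 := lt_of_le_of_ne hP1 hPr1
            have h1P : (0:ℝ) < 1 - Pr := by linarith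
            simp only [if_neg hPr1]
            constructor
            · rintro ⟨j, k⟩
              fin_cases j <;> fin_cases k <;>
                · simp only [Fin.mk_zero, Fin.mk_one, Matrix.of_apply, Matrix.cons_val', Matrix.cons_val_zero, Matrix.cons_val_one,
                    Matrix.head_cons, Matrix.empty_val', Matrix.cons_val_fin_one,
                    Matrix.head_fin_const]
                  exact ⟨div_nonneg (by linarith) (by linarith),
                    (div_le_one h1P).mpr (by linarith)⟩
            · rw [Fintype.sum_prod_type]
              simp only [Fin.mk_zero, Fin.mk_one, Fin.sum_univ_two, Matrix.of_apply, Matrix.cons_val', Matrix.cons_val_zero,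
                Matrix.cons_val_one, Matrix.head_cons, Matrix.empty_val',
                Matrix.cons_val_fin_one, Matrix.head_fin_const]
              field_simp
              linarith [hqs, hq0eq, hq1eq]
        · -- χ 1 row
          simp only [Fin.mk_zero, Fin.mk_one, Matrix.cons_val_one, Matrix.head_cons]
          by_cases hPr0 : Pr = 0
          · simp only [if_pos hPr0]
            constructor
            · rintro ⟨j, k⟩
              fin_cases j <;> fin_cases k <;>
                · simp only [Fin.mk_zero, Fin.mk_one, Matrix.cons_val_zero, Matrix.cons_val_one, Matrix.head_cons]
                  constructor <;>
                    nlinarith [mul_nonneg hS10 hS20,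
                      mul_nonneg hS10 (by linarith : (0:ℝ) ≤ 1 - Se2),
                      mul_nonneg (by linarith : (0:ℝ) ≤ 1 - Se1) hS20,
                      mul_nonneg (by linarith : (0:ℝ) ≤ 1 - Se1) (by linarith : (0:ℝ) ≤ 1 - Se2)]
            · rw [Fintype.sum_prod_type]
              simp only [Fin.mk_zero, Fin.mk_one, Fin.sum_univ_two, Matrix.cons_val_zero, Matrix.cons_val_one,
                Matrix.head_cons]
              ring
          · have hPpos : 0 < Pr := lt_of_le_of_ne hP0 (Ne.symm hPr0)
            simp only [if_neg hPr0]
            constructor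
            · rintro ⟨j, k⟩
              fin_cases j <;> fin_cases k <;>
                · simp only [Fin.mk_zero, Fin.mk_one, Matrix.of_apply, Matrix.cons_val', Matrix.cons_val_zero, Matrix.cons_val_one,
                    Matrix.head_cons, Matrix.empty_val', Matrix.cons_val_fin_one,
                    Matrix.head_fin_const]
                  exact ⟨div_nonneg (by linarith) hP0, (div_le_one hPpos).mpr (by linarith)⟩
            · rw [Fintype.sum_prod_type]
              simp only [Fin.mk_zero, Fin.mk_one, Fin.sum_univ_two, Matrix.of_apply, Matrix.cons_val', Matrix.cons_val_zero,
                Matrix.cons_val_one, Matrix.head_cons, Matrix.empty_val',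
                Matrix.cons_val_fin_one, Matrix.head_fin_const]
              field_simp
              try ring
      · -- mu2 = q
        funext p
        obtain ⟨j, k⟩ := p
        fin_cases j <;> fin_cases k <;>
          · simp only [Fin.mk_zero, Fin.mk_one, mu2, Fin.sum_univ_two, Matrix.cons_val_zero, Matrix.cons_val_one,
              Matrix.head_cons, Matrix.of_apply, Matrix.cons_val', Matrix.empty_val',
              Matrix.cons_val_fin_one, Matrix.head_fin_const]
            by_cases hPr1 : Pr = 1
            · have hPrn0 : Pr ≠ 0 := by rw [hPr1]; norm_num
              simp only [if_pos hPr1, if_neg hPrn0]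
              rw [hPr1]
              norm_num
              linarith [hqs, hua, hub, hu11, hu00, hPr1, hq0eq, hq1eq]
            · by_cases hPr0 : Pr = 0
              · simp only [if_neg hPr1, if_pos hPr0]
                have hs' : s = 0 := by rw [hs, hPr0]; ring
                have ht' : t = 0 := by rw [ht, hPr0]; ring
                have hu' : u = 0 := by linarith
                rw [hPr0]
                norm_num
                linarith
              · have h1P : (1:ℝ) - Pr ≠ 0 := fun h => hPr1 (by linarith)
                simp only [if_neg hPr1, if_neg hPr0]
                field_simp
                try ring
      · -- Sp1 ≤ Sp2
        simp only [chi1, chi2, Fin.mk_zero, Fin.mk_one, Matrix.cons_val_zero]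
        by_cases hPr1 : Pr = 1
        · simp [hPr1]
        · have hPlt : Pr < 1 := lt_of_le_of_ne hP1 hPr1
          have h1P : (0:ℝ) < 1 - Pr := by linarith
          simp only [if_neg hPr1, Matrix.of_apply, Matrix.cons_val', Matrix.cons_val_zero,
            Matrix.cons_val_one, Matrix.head_cons, Matrix.empty_val',
            Matrix.cons_val_fin_one, Matrix.head_fin_const]
          rw [← add_div, ← add_div, div_le_div_iff_of_pos_right h1P]
          nlinarith [h7', h1P.le]
      · -- the point equality
        by_cases hPr0 : Pr = 0
        · simp only [chi1, chi2, if_pos hPr0, Matrix.cons_val_zero, Matrix.cons_val_one,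
            Matrix.head_cons, Prod.mk.injEq]
          refine ⟨by simp, by ring, by ring⟩
        · have hPpos : 0 < Pr := lt_of_le_of_ne hP0 (Ne.symm hPr0)
          simp only [chi1, chi2, if_neg hPr0, Matrix.cons_val_zero, Matrix.cons_val_one,
            Matrix.head_cons, Matrix.of_apply, Matrix.cons_val', Matrix.empty_val',
            Matrix.cons_val_fin_one, Matrix.head_fin_const, Prod.mk.injEq]
          refine ⟨by simp, ?_, ?_⟩
          · rw [← add_div]
            rw [show s - u + u = s by ring, hs]
            field_simp
          · rw [← add_div]
            rw [show t - u + u = t by ring, ht]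
            field_simp

end
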